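/- For every prime power q = p^n, there exists a family of q+1 pairwise mutually unbiased orthonormal bases of ℂ^q. -/

import Mathlib

open Module Complex Finset
open scoped ComplexConjugate

set_option maxHeartbeats 1000000 in
noncomputable section

namespace MUBProof
set_option maxHeartbeats 1000000

variable {E : Type*} [NormedAddCommGroup E] [InnerProductSpace ℂ E]

lemma exists_joint_eigenbasis [FiniteDimensional ℂ E] {ι : Type*} [Finite ι]
    (T : ι → E →ₗ[ℂ] E) (hcomm : ∀ i j, Commute (T i) (T j))
    (hstar : ∀ i j, Commute (LinearMap.adjoint (T i)) (T j)) :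
    ∃ b : OrthonormalBasis (Fin (Module.finrank ℂ E)) ℂ E,
      ∀ k i, ∃ μ : ℂ, T i (b k) = μ • b k := by
  classical
  cases nonempty_fintype ι
  set A : ι × Bool → E →ₗ[ℂ] E := fun x =>
    if x.2 then T x.1 + LinearMap.adjoint (T x.1)
    else Complex.I • (T x.1 - LinearMap.adjoint (T x.1)) with hA
  have htt : ∀ i j, Commute (T i) (T j) := hcomm
  have hft : ∀ i j, Commute (LinearMap.adjoint (T i)) (T j) := hstar
  have htf : ∀ i j, Commute (T i) (LinearMap.adjoint (T j)) := fun i j => (hstar j i).symm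
  have hff : ∀ i j, Commute (LinearMap.adjoint (T i)) (LinearMap.adjoint (T j)) := by
    intro i j
    rw [← LinearMap.star_eq_adjoint, ← LinearMap.star_eq_adjoint]
    exact (hcomm i j).star_star
  have hAcomm : ∀ x y, Commute (A x) (A y) := by
    rintro ⟨i, b⟩ ⟨j, c⟩
    cases b <;> cases c <;> simp only [hA, if_true, if_false, Bool.false_eq_true] <;>
    [ exact (((((htt i j).sub_right (htf i j)).sub_left
        ((hft i j).sub_right (hff i j))).smul_right Complex.I).smul_left Complex.I);
      exact ((((htt i j).add_right (htf i j)).sub_left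
        ((hft i j).add_right (hff i j))).smul_left Complex.I);
      exact (((htt i j).sub_right (htf i j)).add_left
        ((hft i j).sub_right (hff i j))).smul_right Complex.I;
      exact ((htt i j).add_right (htf i j)).add_left ((hft i j).add_right (hff i j))]
  have hAsym : ∀ x, (A x).IsSymmetric := by
    rintro ⟨i, b⟩ u v
    cases b <;>
      simp only [hA, if_true, if_false, Bool.false_eq_true, LinearMap.add_apply,
        LinearMap.smul_apply, LinearMap.sub_apply, inner_add_left, inner_add_right,
        inner_sub_left, inner_sub_right, inner_smul_left, inner_smul_right,
        LinearMap.adjoint_inner_left, LinearMap.adjoint_inner_right, Complex.conj_I] <;>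
      ring
  -- joint eigenspaces
  set J : ((ι × Bool) → ℂ) → Submodule ℂ E :=
    fun α => ⨅ x, Module.End.eigenspace (A x) (α x) with hJ
  have hint : DirectSum.IsInternal J :=
    LinearMap.IsSymmetric.LinearMap.IsSymmetric.directSum_isInternal_of_pairwise_commute
      hAsym (fun x y _ => hAcomm x y)
  have horth : OrthogonalFamily ℂ (fun α => (J α : Submodule ℂ E))
      (fun α => (J α).subtypeₗᵢ) :=
    LinearMap.IsSymmetric.orthogonalFamily_iInf_eigenspaces hAsym
  have hind : iSupIndep J := hint.submodule_iSupIndep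
  haveI : Fintype { α // J α ≠ ⊥ } := hind.fintypeNeBotOfFiniteDimensional
  have hint' : DirectSum.IsInternal (fun α : { α // J α ≠ ⊥ } => J α.1) := by
    rw [DirectSum.isInternal_submodule_iff_iSupIndep_and_iSup_eq_top]
    refine ⟨hind.comp Subtype.val_injective, ?_⟩
    rw [DirectSum.isInternal_submodule_iff_iSupIndep_and_iSup_eq_top] at hint
    rw [← hint.2]
    refine le_antisymm (iSup_le fun α => le_iSup J α.1) (iSup_le fun α => ?_)
    by_cases h : J α = ⊥
    · simp [h]
    · exact le_iSup (fun β : { α // J α ≠ ⊥ } => J β.1) ⟨α, h⟩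
  have horth' : OrthogonalFamily ℂ (fun α : { α // J α ≠ ⊥ } => (J α.1 : Submodule ℂ E))
      (fun α => (J α.1).subtypeₗᵢ) := horth.comp Subtype.val_injective
  refine ⟨hint'.subordinateOrthonormalBasis rfl horth', fun k i => ?_⟩
  have hmem := hint'.subordinateOrthonormalBasis_subordinate rfl k horth'
  set v := hint'.subordinateOrthonormalBasis rfl horth' k with hv
  set α := (hint'.subordinateOrthonormalBasisIndex rfl k horth' : { α // J α ≠ ⊥ })
  have hmem' : ∀ x, v ∈ Module.End.eigenspace (A x) (α.1 x) := by
    intro x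
    exact (Submodule.mem_iInf _).mp hmem x
  have h1 : (T i) v + (LinearMap.adjoint (T i)) v = α.1 (i, true) • v := by
    have := (Module.End.mem_eigenspace_iff).mp (hmem' (i, true))
    simpa [hA] using this
  have h2 : Complex.I • ((T i) v - (LinearMap.adjoint (T i)) v) = α.1 (i, false) • v := by
    have := (Module.End.mem_eigenspace_iff).mp (hmem' (i, false))
    simpa [hA] using this
  refine ⟨(α.1 (i, true) - Complex.I * α.1 (i, false)) / 2, ?_⟩
  have h2' : (T i) v - (LinearMap.adjoint (T i)) v = (-Complex.I * α.1 (i, false)) • v := by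
    have := congrArg (fun z => (-Complex.I) • z) h2
    simpa [smul_smul, Complex.I_mul_I] using this
  have hsum : (2 : ℂ) • ((T i) v) = (α.1 (i, true) - Complex.I * α.1 (i, false)) • v := by
    calc (2 : ℂ) • ((T i) v)
        = ((T i) v + (LinearMap.adjoint (T i)) v)
          + ((T i) v - (LinearMap.adjoint (T i)) v) := by module
      _ = α.1 (i, true) • v + (-Complex.I * α.1 (i, false)) • v := by rw [h1, h2']
      _ = (α.1 (i, true) - Complex.I * α.1 (i, false)) • v := by
          rw [← add_smul]; ring_nf
  have := congrArg (fun z => (2 : ℂ)⁻¹ • z) hsum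
  simpa [smul_smul, div_eq_mul_inv, mul_comm] using this

set_option linter.unusedSectionVars false


variable {F : Type*} [Field F] [Fintype F] [DecidableEq F]

lemma norm_char (χ : AddChar F ℂ) (t : F) : ‖χ t‖ = 1 := by
  have h : χ t ^ Fintype.card F = 1 := by
    rw [← AddChar.map_nsmul_eq_pow, card_nsmul_eq_zero, AddChar.map_zero_eq_one]
  have h2 : ‖χ t‖ ^ Fintype.card F = 1 := by
    rw [← norm_pow, h, norm_one]
  have hpos := Fintype.card_pos (α := F)
  rcases lt_trichotomy ‖χ t‖ 1 with h1 | h1 | h1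
  · exact absurd h2 (by nlinarith [pow_lt_one₀ (norm_nonneg (χ t)) h1 hpos.ne'])
  · exact h1
  · exact absurd h2 (by nlinarith [one_lt_pow₀ h1 hpos.ne'])

lemma conj_char (χ : AddChar F ℂ) (t : F) : conj (χ t) = χ (-t) := by
  have hmul : χ t * χ (-t) = 1 := by
    rw [← AddChar.map_add_eq_mul, add_neg_cancel, AddChar.map_zero_eq_one]
  have h1 : χ t * conj (χ t) = 1 := by
    rw [Complex.mul_conj]
    norm_cast
    simp [Complex.normSq_eq_norm_sq, norm_char]
  exact mul_left_cancel₀ (by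
    intro h; rw [h, zero_mul] at hmul; exact zero_ne_one hmul) (h1.trans hmul.symm)

lemma sum_char_mul (χ : AddChar F ℂ) (hχ : χ.IsPrimitive) (c : F) :
    ∑ a : F, χ (a * c) = if c = 0 then (Fintype.card F : ℂ) else 0 := by
  split_ifs with h
  · subst h; simp
  · have hne : χ.mulShift c ≠ 1 := hχ h
    have := AddChar.sum_eq_zero_of_ne_one hne
    rw [← this]
    exact Finset.sum_congr rfl fun a _ => by rw [AddChar.mulShift_apply, mul_comm]


/-- Heisenberg-Weyl operator. -/
def Uop (χ : AddChar F ℂ) (x a : F) :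
    EuclideanSpace ℂ F →ₗ[ℂ] EuclideanSpace ℂ F where
  toFun f := WithLp.toLp 2 (fun y => χ (a * y) * f (y + x))
  map_add' f g := by
    refine PiLp.ext fun y => ?_
    simp [mul_add]
  map_smul' c f := by
    refine PiLp.ext fun y => ?_
    simp [mul_left_comm]

@[simp] lemma Uop_apply (χ : AddChar F ℂ) (x a : F) (f : EuclideanSpace ℂ F) (y : F) :
    Uop χ x a f y = χ (a * y) * f (y + x) := rfl

lemma Uop_comp (χ : AddChar F ℂ) (x a x' a' : F) :
    (Uop χ x a) ∘ₗ (Uop χ x' a') = χ (a' * x) • Uop χ (x + x') (a + a') := by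
  apply LinearMap.ext
  intro f
  refine PiLp.ext fun y => ?_
  simp only [LinearMap.comp_apply, Uop_apply, LinearMap.smul_apply, PiLp.smul_apply,
    smul_eq_mul]
  rw [show a' * (y + x) = a' * x + a' * y by ring, AddChar.map_add_eq_mul,
    show (a + a') * y = a * y + a' * y by ring, AddChar.map_add_eq_mul,
    add_assoc]
  ring

lemma Uop_zero (χ : AddChar F ℂ) : Uop χ 0 0 = LinearMap.id := by
  apply LinearMap.ext; intro f; refine PiLp.ext fun y => ?_
  simp only [Uop_apply, zero_mul, AddChar.map_zero_eq_one, one_mul, LinearMap.id_apply]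
  exact congrArg f (add_zero y)

lemma norm_Uop (χ : AddChar F ℂ) (x a : F) (f : EuclideanSpace ℂ F) :
    ‖Uop χ x a f‖ = ‖f‖ := by
  rw [EuclideanSpace.norm_eq, EuclideanSpace.norm_eq]
  congr 1
  rw [← Equiv.sum_comp (Equiv.addRight x) (fun y => ‖f y‖ ^ 2)]
  apply Finset.sum_congr rfl
  intro y _
  simp [norm_mul, norm_char]

lemma adjoint_Uop (χ : AddChar F ℂ) (x a : F) :
    LinearMap.adjoint (Uop χ x a) = χ (a * x) • Uop χ (-x) (-a) := by
  symm
  rw [LinearMap.eq_adjoint_iff]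
  intro u v
  simp only [LinearMap.smul_apply, inner_smul_left, PiLp.inner_apply, RCLike.inner_apply,
    Uop_apply, PiLp.smul_apply, smul_eq_mul, map_mul, Finset.mul_sum]
  refine Fintype.sum_equiv (Equiv.subRight x) _ _ (fun y => ?_)
  simp only [Equiv.subRight_apply]
  rw [show y - x + x = y by ring]
  rw [show a * (y - x) = a * y + -(a * x) by ring, AddChar.map_add_eq_mul]
  rw [conj_char, conj_char, show y + -x = y - x by ring, show (-(-a * y)) = a * y by ring]
  ring


/-- x-component of the line parametrization. -/
def Lx : Option F → F → F
  | some _, t => t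
  | none, _ => 0

/-- a-component of the line parametrization. -/
def La : Option F → F → F
  | some m, t => m * t
  | none, t => t

@[simp] lemma Lx_some (m t : F) : Lx (some m) t = t := rfl
@[simp] lemma Lx_none (t : F) : Lx (none : Option F) t = 0 := rfl
@[simp] lemma La_some (m t : F) : La (some m) t = m * t := rfl
@[simp] lemma La_none (t : F) : La (none : Option F) t = t := rfl

lemma Lx_neg (o : Option F) (t : F) : Lx o (-t) = -(Lx o t) := by
  cases o <;> simp

lemma La_neg (o : Option F) (t : F) : La o (-t) = -(La o t) := by
  cases o <;> simp [mul_neg]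

lemma line_mul_comm (o : Option F) (t s : F) : La o s * Lx o t = La o t * Lx o s := by
  cases o <;> simp <;> ring

lemma line_decomp {o o' : Option F} (h : o ≠ o') (x a : F) :
    ∃ t s, x = Lx o t + Lx o' s ∧ a = La o t + La o' s := by
  match o, o' with
  | none, none => exact absurd rfl h
  | none, some m' => exact ⟨a - m' * x, x, by simp, by simp⟩
  | some m, none => exact ⟨x, a - m * x, by simp, by simp⟩
  | some m, some m' =>
    have hmm : m ≠ m' := fun hh => h (by rw [hh])
    have hm : m' - m ≠ 0 := sub_ne_zero.mpr (Ne.symm hmm)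
    refine ⟨(m' * x - a) / (m' - m), x - (m' * x - a) / (m' - m), by simp, ?_⟩
    simp only [La_some]
    field_simp
    ring

variable (χ : AddChar F ℂ)

lemma commute_line (o : Option F) (t s : F) :
    Commute (Uop χ (Lx o t) (La o t)) (Uop χ (Lx o s) (La o s)) := by
  show _ * _ = _ * _
  rw [Module.End.mul_eq_comp, Module.End.mul_eq_comp, Uop_comp, Uop_comp,
    line_mul_comm, add_comm (Lx o s) (Lx o t), add_comm (La o s) (La o t)]

lemma adjoint_line (o : Option F) (t : F) :
    LinearMap.adjoint (Uop χ (Lx o t) (La o t))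
      = χ (La o t * Lx o t) • Uop χ (Lx o (-t)) (La o (-t)) := by
  rw [adjoint_Uop, Lx_neg, La_neg]

lemma char_ne_zero (t : F) : χ t ≠ 0 := by
  intro h
  have := norm_char χ t
  rw [h, norm_zero] at this
  exact zero_ne_one this

/-- Joint orthonormal eigenbasis for the commuting family attached to the line `o`. -/
lemma exists_line_basis (o : Option F) :
    ∃ b : OrthonormalBasis (Fin (Module.finrank ℂ (EuclideanSpace ℂ F))) ℂ
        (EuclideanSpace ℂ F),
      ∀ k t, ∃ μ : ℂ, ‖μ‖ = 1 ∧ Uop χ (Lx o t) (La o t) (b k) = μ • b k := by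
  obtain ⟨b, hb⟩ := exists_joint_eigenbasis (fun t : F => Uop χ (Lx o t) (La o t))
    (fun t s => commute_line χ o t s)
    (fun t s => by
      rw [adjoint_line]
      exact (commute_line χ o (-t) s).smul_left _)
  refine ⟨b, fun k t => ?_⟩
  obtain ⟨μ, hμ⟩ := hb k t
  refine ⟨μ, ?_, hμ⟩
  have hnorm : ‖b k‖ = 1 := b.orthonormal.1 k
  have h1 : ‖Uop χ (Lx o t) (La o t) (b k)‖ = 1 := by rw [norm_Uop, hnorm]
  rw [hμ, norm_smul, hnorm, mul_one] at h1
  exact h1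


lemma mul_conj_eq_one {z : ℂ} (hz : ‖z‖ = 1) : z * conj z = 1 := by
  rw [Complex.mul_conj]
  norm_cast
  simp [Complex.normSq_eq_norm_sq, hz]

/-- Each matrix element against a Weyl operator is a phase times the plain matrix element. -/
lemma inner_Uop_eq (o o' : Option F) (h : o ≠ o') (v w : EuclideanSpace ℂ F)
    (hev : ∀ t, ∃ μ : ℂ, ‖μ‖ = 1 ∧ Uop χ (Lx o t) (La o t) v = μ • v)
    (hew : ∀ t, ∃ μ : ℂ, ‖μ‖ = 1 ∧ Uop χ (Lx o' t) (La o' t) w = μ • w)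
    (x a : F) :
    ∃ P : ℂ, ‖P‖ = 1 ∧ (inner ℂ v (Uop χ x a w) : ℂ) = P * (inner ℂ v w : ℂ) := by
  obtain ⟨t, s, hx, ha⟩ := line_decomp h x a
  obtain ⟨d, hd, hdw⟩ := hew s
  obtain ⟨c, hc, hcv⟩ := hev (-t)
  have hUxa : Uop χ x a = (χ (La o' s * Lx o t))⁻¹ •
      ((Uop χ (Lx o t) (La o t)) ∘ₗ (Uop χ (Lx o' s) (La o' s))) := by
    rw [Uop_comp, ← hx, ← ha, smul_smul, inv_mul_cancel₀ (char_ne_zero χ _), one_smul]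
  have hadj : LinearMap.adjoint (Uop χ (Lx o t) (La o t)) v
      = (χ (La o t * Lx o t) * c) • v := by
    rw [adjoint_line, LinearMap.smul_apply, hcv, smul_smul]
  have key : (inner ℂ v (Uop χ x a w) : ℂ)
      = (χ (La o' s * Lx o t))⁻¹ * (d * (conj (χ (La o t * Lx o t) * c)
          * (inner ℂ v w : ℂ))) := by
    rw [hUxa, LinearMap.smul_apply, inner_smul_right, LinearMap.comp_apply, hdw,
      map_smul, inner_smul_right, ← LinearMap.adjoint_inner_left, hadj, inner_smul_left]
  refine ⟨(χ (La o' s * Lx o t))⁻¹ * (d * conj (χ (La o t * Lx o t) * c)), ?_, by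
    rw [key]; ring⟩
  rw [norm_mul, norm_mul, norm_inv, norm_char, RCLike.norm_conj, norm_mul, norm_char,
    hc, hd]
  norm_num

/-- Parseval-type identity. -/
lemma sum_inner_Uop (v w : EuclideanSpace ℂ F) (hχ : χ.IsPrimitive) :
    ∑ x : F, ∑ a : F, (inner ℂ v (Uop χ x a w) : ℂ) * conj (inner ℂ v (Uop χ x a w) : ℂ)
      = (Fintype.card F : ℂ) * ((inner ℂ v v : ℂ) * (inner ℂ w w : ℂ)) := by
  have h1 : ∀ x a : F, (inner ℂ v (Uop χ x a w) : ℂ)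
      = ∑ y : F, conj (v y) * (χ (a * y) * w (y + x)) := by
    intro x a
    rw [PiLp.inner_apply]
    simp [RCLike.inner_apply]
    exact Finset.sum_congr rfl fun y _ => by ring
  have h2 : ∀ x a : F, conj (inner ℂ v (Uop χ x a w) : ℂ)
      = ∑ y' : F, v y' * (χ (-(a * y')) * conj (w (y' + x))) := by
    intro x a
    rw [h1, map_sum]
    refine Finset.sum_congr rfl fun y' _ => ?_
    rw [map_mul, map_mul, Complex.conj_conj, conj_char]
  calc ∑ x : F, ∑ a : F, (inner ℂ v (Uop χ x a w) : ℂ) * conj (inner ℂ v (Uop χ x a w) : ℂ)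
      = ∑ x : F, ∑ y : F, ∑ y' : F,
          ((conj (v y) * v y' * (w (y + x) * conj (w (y' + x))))
            * ∑ a : F, χ (a * (y - y'))) := by
        refine Finset.sum_congr rfl fun x _ => ?_
        rw [show (∑ a : F, (inner ℂ v (Uop χ x a w) : ℂ) * conj (inner ℂ v (Uop χ x a w) : ℂ))
            = ∑ a : F, ∑ y : F, ∑ y' : F,
              ((conj (v y) * v y' * (w (y + x) * conj (w (y' + x)))) * χ (a * (y - y')))
          from Finset.sum_congr rfl fun a _ => by
            rw [h2, h1, Finset.sum_mul_sum]
            refine Finset.sum_congr rfl fun y _ => Finset.sum_congr rfl fun y' _ => ?_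
            rw [show a * (y - y') = a * y + -(a * y') by ring, AddChar.map_add_eq_mul]
            ring]
        rw [Finset.sum_comm]
        refine Finset.sum_congr rfl fun y _ => ?_
        rw [Finset.sum_comm]
        exact Finset.sum_congr rfl fun y' _ => (Finset.mul_sum _ _ _).symm
    _ = ∑ x : F, ∑ y : F, (conj (v y) * v y * (w (y + x) * conj (w (y + x))))
          * (Fintype.card F : ℂ) := by
        refine Finset.sum_congr rfl fun x _ => Finset.sum_congr rfl fun y _ => ?_
        rw [show (∑ y' : F, (conj (v y) * v y' * (w (y + x) * conj (w (y' + x))))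
              * ∑ a : F, χ (a * (y - y')))
            = ∑ y' : F, if y = y' then (conj (v y) * v y' * (w (y + x) * conj (w (y' + x))))
                * (Fintype.card F : ℂ) else 0
          from Finset.sum_congr rfl fun y' _ => by
            rw [sum_char_mul χ hχ]
            simp only [sub_eq_zero, mul_ite, mul_zero]]
        rw [Finset.sum_ite_eq]
        simp
    _ = (Fintype.card F : ℂ) * ((inner ℂ v v : ℂ) * (inner ℂ w w : ℂ)) := by
        have hv : (inner ℂ v v : ℂ) = ∑ y : F, conj (v y) * v y := by
          rw [PiLp.inner_apply]; exact Finset.sum_congr rfl fun y _ => (RCLike.inner_apply _ _).trans (mul_comm _ _)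
        have hw : (inner ℂ w w : ℂ) = ∑ z : F, w z * conj (w z) := by
          rw [PiLp.inner_apply]
          exact Finset.sum_congr rfl fun z _ => RCLike.inner_apply _ _
        rw [Finset.sum_comm]
        rw [show (∑ y : F, ∑ x : F, (conj (v y) * v y * (w (y + x) * conj (w (y + x))))
              * (Fintype.card F : ℂ))
            = ∑ y : F, (conj (v y) * v y)
                * ((Fintype.card F : ℂ) * ∑ z : F, w z * conj (w z))
          from Finset.sum_congr rfl fun y _ => by
            rw [← Finset.sum_mul, ← Finset.mul_sum,
              ← Equiv.sum_comp (Equiv.addLeft y) (fun z => w z * conj (w z))]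
            simp only [Equiv.coe_addLeft]
            ring]
        rw [← Finset.sum_mul, hv, hw]
        ring


lemma mub_inner (hχ : χ.IsPrimitive) {o o' : Option F} (h : o ≠ o')
    (v w : EuclideanSpace ℂ F) (hv1 : (inner ℂ v v : ℂ) = 1) (hw1 : (inner ℂ w w : ℂ) = 1)
    (hev : ∀ t, ∃ μ : ℂ, ‖μ‖ = 1 ∧ Uop χ (Lx o t) (La o t) v = μ • v)
    (hew : ∀ t, ∃ μ : ℂ, ‖μ‖ = 1 ∧ Uop χ (Lx o' t) (La o' t) w = μ • w) :
    (inner ℂ v w : ℂ) * conj (inner ℂ v w : ℂ) = (Fintype.card F : ℂ)⁻¹ := by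
  have hsum := sum_inner_Uop χ v w hχ
  have heach : ∀ x a : F, (inner ℂ v (Uop χ x a w) : ℂ) * conj (inner ℂ v (Uop χ x a w) : ℂ)
      = (inner ℂ v w : ℂ) * conj (inner ℂ v w : ℂ) := by
    intro x a
    obtain ⟨P, hP, heq⟩ := inner_Uop_eq χ o o' h v w hev hew x a
    rw [heq, map_mul]
    calc P * (inner ℂ v w : ℂ) * ((starRingEnd ℂ) P * conj (inner ℂ v w : ℂ))
        = (P * conj P) * ((inner ℂ v w : ℂ) * conj (inner ℂ v w : ℂ)) := by ring
      _ = (inner ℂ v w : ℂ) * conj (inner ℂ v w : ℂ) := by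
          rw [mul_conj_eq_one hP, one_mul]
  rw [hv1, hw1] at hsum
  simp only [heach, Finset.sum_const, Finset.card_univ, nsmul_eq_mul, mul_one] at hsum
  have hq : (Fintype.card F : ℂ) ≠ 0 := by
    exact_mod_cast Nat.cast_ne_zero.mpr Fintype.card_ne_zero
  field_simp at hsum ⊢
  rw [← hsum]

end MUBProof

open MUBProof in
/-- For every prime power `q = p^n`, there exists a family of `q + 1` pairwise mutually
unbiased orthonormal bases of `ℂ^q`. -/
theorem exists_maximal_mub_family_prime_power (p n : ℕ) (hp : p.Prime) (hn : 0 < n) :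
    ∃ B : Fin (p ^ n + 1) →
        OrthonormalBasis (Fin (p ^ n)) ℂ (EuclideanSpace ℂ (Fin (p ^ n))),
      ∀ i j, i ≠ j → ∀ k l,
        ‖(inner ℂ (B i k) (B j l) : ℂ)‖ ^ 2 = 1 / ((p : ℝ) ^ n) := by
  classical
  haveI : Fact p.Prime := ⟨hp⟩
  haveI : NeZero p := ⟨hp.pos.ne'⟩
  set F := GaloisField p n with hF
  haveI : Fintype F := Fintype.ofFinite F
  have hcard : Fintype.card F = p ^ n := by
    rw [← Nat.card_eq_fintype_card]
    exact GaloisField.card p n hn.ne'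
  -- the additive character
  set χ : AddChar F ℂ := (ZMod.stdAddChar (N := p)).compAddMonoidHom
    (Algebra.trace (ZMod p) F).toAddMonoidHom with hχdef
  have hχ : χ.IsPrimitive := by
    intro a ha hcon
    have hnd := traceForm_nondegenerate (ZMod p) F
    have : ∀ b : F, Algebra.traceForm (ZMod p) F a b = 0 := by
      intro b
      have hb := DFunLike.congr_fun hcon b
      rw [AddChar.mulShift_apply, AddChar.one_apply] at hb
      have hb' : ZMod.stdAddChar (N := p) (Algebra.trace (ZMod p) F (a * b))
          = ZMod.stdAddChar (N := p) 0 := by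
        rw [AddChar.map_zero_eq_one]
        exact hb
      rw [Algebra.traceForm_apply]
      exact ZMod.injective_stdAddChar hb'
    exact ha (hnd.1 a this)
  -- eigenbases for each line
  have hex := fun o : Option F => exists_line_basis χ o
  choose bo hbo using hex
  -- transports
  have hrank : Module.finrank ℂ (EuclideanSpace ℂ F) = p ^ n := by
    rw [finrank_euclideanSpace, hcard]
  have hcardo : Fintype.card (Option F) = p ^ n + 1 := by
    rw [Fintype.card_option, hcard]
  set eF : F ≃ Fin (p ^ n) := Fintype.equivFinOfCardEq hcard
  set eo : Option F ≃ Fin (p ^ n + 1) := Fintype.equivFinOfCardEq hcardo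
  set L : EuclideanSpace ℂ F ≃ₗᵢ[ℂ] EuclideanSpace ℂ (Fin (p ^ n)) :=
    LinearIsometryEquiv.piLpCongrLeft 2 ℂ ℂ eF
  refine ⟨fun i => ((bo (eo.symm i)).reindex (finCongr hrank)).map L, ?_⟩
  intro i j hij k l
  have hne : eo.symm i ≠ eo.symm j := fun hh => hij (eo.symm.injective.eq_iff.mp hh ▸ rfl)
  set o := eo.symm i
  set o' := eo.symm j
  set k' := (finCongr hrank).symm k
  set l' := (finCongr hrank).symm l
  have hmap : ∀ (o₀ : Option F) (k₀ : Fin (p ^ n)),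
      (((bo o₀).reindex (finCongr hrank)).map L) k₀
        = L ((bo o₀) ((finCongr hrank).symm k₀)) := by
    intro o₀ k₀
    rw [OrthonormalBasis.map_apply, OrthonormalBasis.reindex_apply]
  rw [hmap, hmap, LinearIsometryEquiv.inner_map_map]
  have hv1 : (inner ℂ (bo o k') (bo o k') : ℂ) = 1 := by
    have := orthonormal_iff_ite.mp (bo o).orthonormal k' k'
    simpa using this
  have hw1 : (inner ℂ (bo o' l') (bo o' l') : ℂ) = 1 := by
    have := orthonormal_iff_ite.mp (bo o').orthonormal l' l'
    simpa using this
  have hz := mub_inner χ hχ hne (bo o k') (bo o' l') hv1 hw1 (hbo o k') (hbo o' l')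
  set z : ℂ := (inner ℂ (bo o k') (bo o' l') : ℂ) with hzdef
  rw [Complex.mul_conj] at hz
  have h3 : ((Complex.normSq z : ℝ) : ℂ) = (((Fintype.card F : ℝ))⁻¹ : ℂ) := by
    rw [hz]; push_cast; ring
  have h4 : Complex.normSq z = ((Fintype.card F : ℝ))⁻¹ := by exact_mod_cast h3
  have h5 : ‖z‖ ^ 2 = Complex.normSq z := by
    rw [Complex.sq_norm]
  rw [h5, h4, hcard]
  rw [one_div]
  push_cast
  ring
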